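/- arXiv:2310.10202 — 2 statements merged into one kernel-verified Lean document; each statement's English description precedes it below -/
import Mathlib

section
/- For any real exponents c ≥ 0 and a ≥ 0, the weighted L^p norm of the anisotropic Gaussian-type kernel satisfies ‖G_t(x) · w_c(x)^{-1} · ‖x‖_s^a‖_{L^p_x(ℝ^d)} ≲ t^{-(|s|/ℓ)(1-1/p) + a/ℓ}, uniformly over p ∈ [1,∞] and t ∈ (0,1]. -/
open MeasureTheory
open scoped ENNReal
open Real Set

/-- Anisotropic quasi-norm `‖x‖ₛ = Σⱼ |xⱼ|^(1/sⱼ)`. -/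
noncomputable def normS (d : ℕ) (s : Fin d → ℝ) (x : Fin d → ℝ) : ℝ :=
  ∑ j, |x j| ^ (1 / s j)

/-- Polynomial weight `w_c(x) = (1 + ‖x‖ₛ)^(-c)`. -/
noncomputable def wgt (d : ℕ) (s : Fin d → ℝ) (c : ℝ) (x : Fin d → ℝ) : ℝ :=
  (1 + normS d s x) ^ (-c)

/-- Anisotropic Gaussian-type kernel
`G_t(x) = t^{-|s|/ℓ} exp(-c₁ Σⱼ (|xⱼ|/t^{sⱼ/ℓ})^{ℓ/(ℓ-sⱼ)})`. -/
noncomputable def Gker (d : ℕ) (s : Fin d → ℝ) (ℓ c₁ : ℝ) (t : ℝ) (x : Fin d → ℝ) : ℝ :=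
  t ^ (-(∑ j, s j) / ℓ) *
    Real.exp (-c₁ * ∑ j, (|x j| / t ^ (s j / ℓ)) ^ (ℓ / (ℓ - s j)))


/-- One-dimensional exponent bound. -/
lemma exp_bound_aux {c₁ q σ K₀ : ℝ} (hc₁ : 0 < c₁) (hq : 1 < q) (hσ0 : 0 < σ) (hσ1 : σ ≤ 1)
    (hK₀ : 0 ≤ K₀) :
    ∃ B : ℝ, 0 ≤ B ∧ ∀ u : ℝ,
      Real.exp (-c₁ * |u| ^ q + K₀ * |u| ^ σ) ≤ Real.exp B * Real.exp (-|u|) := by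
  set K : ℝ := K₀ + 1 with hK
  have hK1 : 1 ≤ K := by simp [hK]; linarith
  set R : ℝ := max 1 ((2 * K / c₁) ^ (1 / (q - 1))) with hR
  have hR1 : 1 ≤ R := le_max_left _ _
  refine ⟨K * (1 + R), by nlinarith, fun u => ?_⟩
  rw [← Real.exp_add, Real.exp_le_exp]
  set v : ℝ := |u| with hv
  have hv0 : 0 ≤ v := abs_nonneg u
  have h1 : v ^ σ ≤ 1 + v := by
    rcases le_or_gt v 1 with h | h
    · have := Real.rpow_le_one hv0 h hσ0.le
      linarith
    · calc v ^ σ ≤ v ^ (1 : ℝ) := Real.rpow_le_rpow_of_exponent_le h.le hσ1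
        _ = v := Real.rpow_one v
        _ ≤ 1 + v := by linarith
  have hvq : 0 ≤ v ^ q := Real.rpow_nonneg hv0 q
  have hmain : K + K * v - c₁ * v ^ q ≤ K * (1 + R) := by
    rcases le_or_gt v R with h | h
    · nlinarith
    · have hv1 : 1 ≤ v := le_trans hR1 h.le
      have hvpos : 0 < v := by linarith
      have h2 : 2 * K / c₁ ≤ v ^ (q - 1) := by
        have hx : (2 * K / c₁) ^ (1 / (q - 1)) ≤ v := le_trans (le_max_right _ _) h.le
        have h2K : (0:ℝ) ≤ 2 * K / c₁ := by positivity
        calc 2 * K / c₁ = ((2 * K / c₁) ^ ((q - 1)⁻¹)) ^ (q - 1) :=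
              (Real.rpow_inv_rpow h2K (by linarith)).symm
          _ ≤ v ^ (q - 1) := by
              rw [← one_div] at *
              exact Real.rpow_le_rpow (Real.rpow_nonneg h2K _) hx (by linarith)
      have h3 : v ^ q = v ^ (q - 1) * v := by
        rw [← Real.rpow_add_one hvpos.ne' (q - 1)]; ring_nf
      have h4 : 2 * K * v ≤ c₁ * v ^ q := by
        rw [h3]
        have := mul_le_mul_of_nonneg_right h2 hv0
        have := mul_le_mul_of_nonneg_left this hc₁.le
        calc 2 * K * v = c₁ * (2 * K / c₁ * v) := by field_simp
          _ ≤ c₁ * (v ^ (q - 1) * v) := by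
              exact mul_le_mul_of_nonneg_left (mul_le_mul_of_nonneg_right h2 hv0) hc₁.le
      nlinarith
  nlinarith [mul_le_mul_of_nonneg_left h1 hK₀]

lemma integrable_exp_neg_abs' : Integrable (fun u : ℝ => Real.exp (-|u|)) := by
  have h1 : IntegrableOn (fun u : ℝ => Real.exp (-|u|)) (Ioi 0) := by
    have h := exp_neg_integrableOn_Ioi 0 (b := 1) one_pos
    refine h.congr_fun (fun x hx => ?_) measurableSet_Ioi
    rw [abs_of_pos hx]; ring_nf
  have h2 : IntegrableOn (fun u : ℝ => Real.exp (-|u|)) (Iic 0) := by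
    rw [← Measure.map_neg_eq_self (volume : Measure ℝ)]
    have m : MeasurableEmbedding fun x : ℝ => -x := (Homeomorph.neg ℝ).measurableEmbedding
    rw [m.integrableOn_map_iff]
    simp only [Function.comp_def, abs_neg, neg_preimage, neg_Iic, neg_zero]
    exact (integrableOn_Ici_iff_integrableOn_Ioi).mpr h1
  have := h2.union h1
  rw [Iic_union_Ioi] at this; exact integrableOn_univ.mp this

lemma integrable_g {c₁ q σ K₀ B : ℝ}
    (hq : 0 < q) (hσ0 : 0 < σ)
    (hB : ∀ u : ℝ, Real.exp (-c₁ * |u| ^ q + K₀ * |u| ^ σ) ≤ Real.exp B * Real.exp (-|u|)) :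
    Integrable (fun u : ℝ => Real.exp (-c₁ * |u| ^ q + K₀ * |u| ^ σ)) := by
  have hcont : Continuous (fun u : ℝ => Real.exp (-c₁ * |u| ^ q + K₀ * |u| ^ σ)) := by
    apply Real.continuous_exp.comp
    apply Continuous.add
    · exact continuous_const.mul ((continuous_abs).rpow_const (fun x => Or.inr hq.le))
    · exact continuous_const.mul ((continuous_abs).rpow_const (fun x => Or.inr hσ0.le))
  refine (integrable_exp_neg_abs'.const_mul (Real.exp B)).mono' hcont.aestronglyMeasurable ?_
  filter_upwards with u
  rw [Real.norm_eq_abs, abs_of_pos (Real.exp_pos _)]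
  exact hB u

lemma normS_nonneg (d : ℕ) (s : Fin d → ℝ) (x : Fin d → ℝ) : 0 ≤ normS d s x :=
  Finset.sum_nonneg fun j _ => Real.rpow_nonneg (abs_nonneg _) _

lemma f_nonneg (d : ℕ) (s : Fin d → ℝ) (ℓ c₁ : ℝ) (c a t : ℝ) (x : Fin d → ℝ) (ht0 : 0 < t) :
    0 ≤ Gker d s ℓ c₁ t x * (wgt d s c x)⁻¹ * normS d s x ^ a := by
  have h1 : 0 ≤ normS d s x := normS_nonneg d s x
  have h2 : (0:ℝ) < 1 + normS d s x := by linarith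
  unfold Gker wgt
  positivity

lemma core_pointwise (d : ℕ) (s : Fin d → ℝ) (hs : ∀ j, 1 ≤ s j) (ℓ : ℝ) (hℓ : ∀ j, s j < ℓ)
    (hℓ0 : 0 < ℓ) (c₁ : ℝ) (c a : ℝ) (hc : 0 ≤ c) (ha : 0 ≤ a)
    (t : ℝ) (ht0 : 0 < t) (ht1 : t ≤ 1) (x : Fin d → ℝ) :
    Gker d s ℓ c₁ t x * (wgt d s c x)⁻¹ * normS d s x ^ a ≤
      t ^ (-(∑ j, s j) / ℓ + a / ℓ) *
        ∏ j, Real.exp (-c₁ * |x j / t ^ (s j / ℓ)| ^ (ℓ / (ℓ - s j))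
              + (c + a) * |x j / t ^ (s j / ℓ)| ^ (1 / s j)) := by
  set A : Fin d → ℝ := fun j => t ^ (s j / ℓ) with hA
  have hA0 : ∀ j, 0 < A j := fun j => Real.rpow_pos_of_pos ht0 _
  set y : Fin d → ℝ := fun j => x j / A j with hy
  have habs : ∀ j, |x j| / A j = |y j| := fun j => by
    rw [hy]; simp only [abs_div, abs_of_pos (hA0 j)]
  have hNy0 : 0 ≤ normS d s y := normS_nonneg d s y
  set NY : ℝ := normS d s y with hNY
  have hNx : normS d s x = t ^ (1/ℓ) * NY := by
    rw [hNY]; unfold normS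
    rw [Finset.mul_sum]
    refine Finset.sum_congr rfl fun j _ => ?_
    have hsj : s j ≠ 0 := by have := hs j; linarith
    calc |x j| ^ (1 / s j) = (|y j| * A j) ^ (1 / s j) := by
          rw [← abs_of_pos (hA0 j), ← abs_mul, div_mul_cancel₀ _ (hA0 j).ne']
      _ = |y j| ^ (1 / s j) * (A j) ^ (1 / s j) := Real.mul_rpow (abs_nonneg _) (hA0 j).le
      _ = t ^ (1/ℓ) * |y j| ^ (1 / s j) := by
          rw [mul_comm]; congr 1
          rw [hA, ← Real.rpow_mul ht0.le]
          congr 1; field_simp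
  have hNx0 : 0 ≤ normS d s x := normS_nonneg d s x
  have hGk : Gker d s ℓ c₁ t x
      = t ^ (-(∑ j, s j)/ℓ) * Real.exp (-c₁ * ∑ j, |y j| ^ (ℓ/(ℓ - s j))) := by
    unfold Gker
    congr 3
    exact Finset.sum_congr rfl fun j _ => by rw [habs j]
  have hw : (wgt d s c x)⁻¹ = (1 + normS d s x) ^ c := by
    unfold wgt
    rw [Real.rpow_neg (by linarith), inv_inv]
  have hT1 : t ^ (1/ℓ) ≤ 1 := Real.rpow_le_one ht0.le ht1 (by positivity)
  have hNle : normS d s x ≤ NY := by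
    rw [hNx]; exact mul_le_of_le_one_left hNy0 hT1
  have hexpc : ∀ z : ℝ, (Real.exp NY) ^ z = Real.exp (z * NY) := fun z => by
    rw [Real.rpow_def_of_pos (Real.exp_pos _), Real.log_exp, mul_comm]
  have hWb : (1 + normS d s x) ^ c ≤ Real.exp (c * NY) := by
    have h1 : 1 + normS d s x ≤ Real.exp NY := by
      have := Real.add_one_le_exp NY; linarith
    calc (1 + normS d s x) ^ c ≤ (Real.exp NY) ^ c :=
          Real.rpow_le_rpow (by linarith) h1 hc
      _ = Real.exp (c * NY) := hexpc c
  have hNa : normS d s x ^ a ≤ t ^ (a/ℓ) * Real.exp (a * NY) := by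
    rw [hNx, Real.mul_rpow (by positivity) hNy0, ← Real.rpow_mul ht0.le]
    have h2 : NY ^ a ≤ Real.exp (a * NY) := by
      have h3 : NY ≤ Real.exp NY := by have := Real.add_one_le_exp NY; linarith
      calc NY ^ a ≤ (Real.exp NY) ^ a := Real.rpow_le_rpow hNy0 h3 ha
        _ = Real.exp (a * NY) := hexpc a
    have h4 : 1/ℓ * a = a/ℓ := by ring
    rw [h4]
    exact mul_le_mul_of_nonneg_left h2 (Real.rpow_nonneg ht0.le _)
  rw [hGk, hw]
  set E : ℝ := Real.exp (-c₁ * ∑ j, |y j| ^ (ℓ/(ℓ - s j))) with hE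
  have hstep : t ^ (-(∑ j, s j)/ℓ) * E * (1 + normS d s x) ^ c * normS d s x ^ a
      ≤ t ^ (-(∑ j, s j)/ℓ) * E * Real.exp (c * NY) * (t ^ (a/ℓ) * Real.exp (a * NY)) := by
    have hpos : 0 ≤ t ^ (-(∑ j, s j)/ℓ) * E := by positivity
    exact mul_le_mul (mul_le_mul_of_nonneg_left hWb hpos) hNa
      (Real.rpow_nonneg hNx0 a) (by positivity)
  refine hstep.trans (le_of_eq ?_)
  rw [hE]
  have hsum : -c₁ * ∑ j, |y j| ^ (ℓ/(ℓ - s j)) + c * NY + a * NY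
      = ∑ j, (-c₁ * |y j| ^ (ℓ / (ℓ - s j)) + (c + a) * |y j| ^ (1 / s j)) := by
    rw [hNY]; unfold normS
    rw [Finset.sum_add_distrib]
    simp only [neg_mul, Finset.sum_neg_distrib, ← Finset.mul_sum]
    ring
  calc t ^ (-(∑ j, s j)/ℓ) * Real.exp (-c₁ * ∑ j, |y j| ^ (ℓ/(ℓ - s j))) * Real.exp (c * NY)
        * (t ^ (a/ℓ) * Real.exp (a * NY))
      = (t ^ (-(∑ j, s j)/ℓ) * t ^ (a/ℓ)) *
          Real.exp (-c₁ * ∑ j, |y j| ^ (ℓ/(ℓ - s j)) + c * NY + a * NY) := by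
        rw [Real.exp_add, Real.exp_add]; ring
    _ = t ^ (-(∑ j, s j) / ℓ + a / ℓ) *
        ∏ j, Real.exp (-c₁ * |y j| ^ (ℓ / (ℓ - s j)) + (c + a) * |y j| ^ (1 / s j)) := by
        rw [← Real.rpow_add ht0, hsum, Real.exp_sum]

/-- For `c ≥ 0` and `a ≥ 0`,
`‖G_t(x) w_c(x)⁻¹ ‖x‖ₛ^a‖_{L^p_x(ℝ^d)} ≲ t^{-(|s|/ℓ)(1-1/p)+a/ℓ}`
uniformly over `p ∈ [1,∞]` and `t ∈ (0,1]`. -/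
theorem gaussian_weighted_Lp_bound
    (d : ℕ) (hd : 0 < d) (s : Fin d → ℝ) (hs : ∀ j, 1 ≤ s j)
    (ℓ : ℝ) (hℓ : ∀ j, s j < ℓ) (c₁ : ℝ) (hc₁ : 0 < c₁)
    (c a : ℝ) (hc : 0 ≤ c) (ha : 0 ≤ a) :
    ∃ C : ℝ, 0 < C ∧ ∀ p : ℝ≥0∞, 1 ≤ p → ∀ t : ℝ, 0 < t → t ≤ 1 →
      eLpNorm (fun x => Gker d s ℓ c₁ t x * (wgt d s c x)⁻¹ * normS d s x ^ a) p volume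
        ≤ ENNReal.ofReal (C * t ^ (-(∑ j, s j) / ℓ * (1 - (p⁻¹).toReal) + a / ℓ)) := by
  obtain ⟨j0⟩ : Nonempty (Fin d) := ⟨⟨0, hd⟩⟩
  have hℓ1 : 1 < ℓ := lt_of_le_of_lt (hs j0) (hℓ j0)
  have hℓ0 : 0 < ℓ := by linarith
  have hℓs : ∀ j, 0 < ℓ - s j := fun j => by have := hℓ j; linarith
  have hq1 : ∀ j, 1 < ℓ / (ℓ - s j) := fun j => by
    rw [lt_div_iff₀ (hℓs j)]
    have := hs j; linarith
  have hσ0 : ∀ j, 0 < 1 / s j := fun j => by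
    have := hs j; positivity
  have hσ1 : ∀ j, 1 / s j ≤ 1 := fun j => by
    have h := hs j
    rw [div_le_one (by linarith)]; exact h
  -- one-dimensional profiles
  choose B hB0 hBg using fun j =>
    exp_bound_aux (c₁ := c₁) (hq := hq1 j) (hσ0 := hσ0 j) (hσ1 := hσ1 j)
      (K₀ := c + a) hc₁ (by linarith)
  set g : Fin d → ℝ → ℝ := fun j u =>
    Real.exp (-c₁ * |u| ^ (ℓ / (ℓ - s j)) + (c + a) * |u| ^ (1 / s j)) with hg
  have hgInt : ∀ j, Integrable (g j) := fun j =>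
    integrable_g (by have := hq1 j; linarith) (hσ0 j) (hBg j)
  have hg0 : ∀ j u, 0 < g j u := fun j u => Real.exp_pos _
  have hgle : ∀ j u, g j u ≤ Real.exp (B j) := fun j u => by
    refine (hBg j u).trans ?_
    have h1 : Real.exp (-|u|) ≤ 1 := by
      rw [← Real.exp_zero]
      exact Real.exp_le_exp.mpr (by simpa using abs_nonneg u)
    exact mul_le_of_le_one_right (Real.exp_pos _).le h1
  set I : Fin d → ℝ := fun j => ∫ u, g j u with hI
  have hI0 : ∀ j, 0 < I j := fun j => by
    rw [hI]
    rw [MeasureTheory.integral_pos_iff_support_of_nonneg (fun u => (hg0 j u).le) (hgInt j)]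
    have hsupp : Function.support (g j) = Set.univ :=
      Set.eq_univ_iff_forall.mpr fun u => (hg0 j u).ne'
    rw [hsupp]
    simp
  set Cinf : ℝ := ∏ j, Real.exp (B j) with hCinf
  set C1 : ℝ := ∏ j, I j with hC1
  have hCinf0 : 0 < Cinf := Finset.prod_pos fun j _ => Real.exp_pos _
  have hC10 : 0 < C1 := Finset.prod_pos fun j _ => hI0 j
  refine ⟨max Cinf C1, lt_max_of_lt_left hCinf0, ?_⟩
  set C : ℝ := max Cinf C1 with hCdef
  have hC0 : 0 < C := lt_max_of_lt_left hCinf0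
  intro p hp t ht0 ht1
  set α : ℝ := -(∑ j, s j) / ℓ + a / ℓ with hα
  set f : (Fin d → ℝ) → ℝ :=
    fun x => Gker d s ℓ c₁ t x * (wgt d s c x)⁻¹ * normS d s x ^ a with hf
  set P : (Fin d → ℝ) → ℝ := fun x => ∏ j, g j (x j / t ^ (s j / ℓ)) with hP
  have hP0 : ∀ x, 0 ≤ P x := fun x => Finset.prod_nonneg fun j _ => (hg0 j _).le
  have hcore : ∀ x, f x ≤ t ^ α * P x := fun x =>
    core_pointwise d s hs ℓ hℓ hℓ0 c₁ c a hc ha t ht0 ht1 x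
  have hf0 : ∀ x, 0 ≤ f x := fun x => f_nonneg d s ℓ c₁ c a t x ht0
  have hPt : ∀ x, (‖f x‖₊ : ℝ≥0∞) ≤ ENNReal.ofReal (t ^ α * P x) := fun x => by
    rw [← enorm_eq_nnnorm, Real.enorm_eq_ofReal (hf0 x)]
    exact ENNReal.ofReal_le_ofReal (hcore x)
  have hPb : ∀ x, P x ≤ Cinf := fun x =>
    Finset.prod_le_prod (fun j _ => (hg0 j _).le) (fun j _ => hgle j _)
  have htα0 : (0:ℝ) < t ^ α := Real.rpow_pos_of_pos ht0 _
  have hPtinf : ∀ x, (‖f x‖₊ : ℝ≥0∞) ≤ ENNReal.ofReal (Cinf * t ^ α) := fun x => by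
    refine (hPt x).trans (ENNReal.ofReal_le_ofReal ?_)
    rw [mul_comm (Cinf) (t ^ α)]
    exact mul_le_mul_of_nonneg_left (hPb x) htα0.le
  -- L¹ estimate
  have hA0 : ∀ j, (0:ℝ) < t ^ (s j / ℓ) := fun j => Real.rpow_pos_of_pos ht0 _
  have hint_scaled : ∀ j, Integrable (fun u => g j (u / t ^ (s j / ℓ))) := fun j =>
    (hgInt j).comp_div (hA0 j).ne'
  have hPint : Integrable P :=
    MeasureTheory.Integrable.fintype_prod (f := fun j u => g j (u / t ^ (s j / ℓ)))
      hint_scaled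
  have hPval : ∫ x, P x = t ^ ((∑ j, s j) / ℓ) * C1 := by
    rw [hP]; beta_reduce; rw [MeasureTheory.volume_pi]
    rw [MeasureTheory.integral_fintype_prod_eq_prod
      (fun j u => g j (u / t ^ (s j / ℓ)))]
    have : ∀ j, (∫ u, g j (u / t ^ (s j / ℓ))) = t ^ (s j / ℓ) * I j := fun j => by
      rw [MeasureTheory.Measure.integral_comp_div (g j) (t ^ (s j / ℓ))]
      rw [abs_of_pos (hA0 j), smul_eq_mul, hI]
    rw [Finset.prod_congr rfl fun j _ => this j, Finset.prod_mul_distrib]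
    congr 1
    rw [← Real.rpow_sum_of_pos ht0 (fun j => s j / ℓ) Finset.univ, Finset.sum_div]
  have hN1 : (∫⁻ x, (‖f x‖₊ : ℝ≥0∞)) ≤ ENNReal.ofReal (C1 * t ^ (a / ℓ)) := by
    calc (∫⁻ x, (‖f x‖₊ : ℝ≥0∞)) ≤ ∫⁻ x, ENNReal.ofReal (t ^ α * P x) :=
          lintegral_mono hPt
      _ = ENNReal.ofReal (∫ x, t ^ α * P x) := by
          rw [MeasureTheory.ofReal_integral_eq_lintegral_ofReal (hPint.const_mul _)
            (Filter.Eventually.of_forall fun x => mul_nonneg htα0.le (hP0 x))]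
      _ = ENNReal.ofReal (C1 * t ^ (a / ℓ)) := by
          rw [MeasureTheory.integral_const_mul, hPval]
          congr 1
          rw [show t ^ α * (t ^ ((∑ j, s j) / ℓ) * C1)
              = C1 * (t ^ α * t ^ ((∑ j, s j) / ℓ)) from by ring,
            ← Real.rpow_add ht0]
          congr 1
          rw [hα]; ring
  -- interpolation / conclusion
  by_cases hptop : p = ∞
  · subst hptop
    have hLinf : eLpNorm f ∞ volume ≤ ENNReal.ofReal (Cinf * t ^ α) := by
      rw [eLpNorm_exponent_top]
      refine eLpNormEssSup_le_of_ae_bound (C := Cinf * t ^ α)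
        (Filter.Eventually.of_forall fun x => ?_)
      rw [Real.norm_eq_abs, abs_of_nonneg (hf0 x)]
      exact (hcore x).trans (by rw [mul_comm Cinf (t ^ α)]; exact mul_le_mul_of_nonneg_left (hPb x) htα0.le)
    refine hLinf.trans (ENNReal.ofReal_le_ofReal ?_)
    have hE : -(∑ j, s j) / ℓ * (1 - ((⊤:ℝ≥0∞)⁻¹).toReal) + a / ℓ = α := by
      simp [hα]
    rw [hE]
    exact mul_le_mul_of_nonneg_right (le_max_left _ _) htα0.le
  · have hp0 : p ≠ 0 := (lt_of_lt_of_le zero_lt_one hp).ne'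
    set r : ℝ := p.toReal with hr
    have hr1 : (1:ℝ) ≤ r := by
      rw [hr, ← ENNReal.toReal_one]
      exact ENNReal.toReal_mono hptop hp
    have hr0 : (0:ℝ) < r := lt_of_lt_of_le one_pos hr1
    set Binf : ℝ≥0∞ := ENNReal.ofReal (Cinf * t ^ α) with hBinf
    have hBinf_ne : Binf ^ (r - 1) ≠ ⊤ :=
      ENNReal.rpow_ne_top_of_nonneg (by linarith) ENNReal.ofReal_ne_top
    have hmono : (∫⁻ x, (‖f x‖₊ : ℝ≥0∞) ^ r) ≤ Binf ^ (r - 1) * ∫⁻ x, (‖f x‖₊ : ℝ≥0∞) := by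
      calc (∫⁻ x, (‖f x‖₊ : ℝ≥0∞) ^ r)
          ≤ ∫⁻ x, Binf ^ (r - 1) * (‖f x‖₊ : ℝ≥0∞) := by
            refine lintegral_mono fun x => ?_
            have hx : (‖f x‖₊ : ℝ≥0∞) ^ r
                = (‖f x‖₊ : ℝ≥0∞) ^ (r - 1) * (‖f x‖₊ : ℝ≥0∞) := by
              rw [show r = (r-1) + 1 from by ring, ENNReal.rpow_add_of_nonneg _ _
                (by linarith) zero_le_one]
              simp
            rw [hx]
            exact mul_le_mul_left (ENNReal.rpow_le_rpow (hPtinf x) (by linarith)) _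
        _ = Binf ^ (r - 1) * ∫⁻ x, (‖f x‖₊ : ℝ≥0∞) := lintegral_const_mul' _ _ hBinf_ne
    rw [eLpNorm_eq_lintegral_rpow_enorm_toReal hp0 hptop]
    have hstep : (∫⁻ x, ((‖f x‖₊ : ℝ≥0∞)) ^ p.toReal) ^ (1 / p.toReal)
        ≤ (Binf ^ (r - 1) * ENNReal.ofReal (C1 * t ^ (a / ℓ))) ^ (1 / r) := by
      rw [← hr]
      exact ENNReal.rpow_le_rpow (hmono.trans (mul_le_mul_right hN1 _)) (div_nonneg zero_le_one hr0.le)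
    refine hstep.trans ?_
    have hbinf_pos : (0:ℝ) < Cinf * t ^ α := mul_pos hCinf0 htα0
    have hb1_pos : (0:ℝ) < C1 * t ^ (a / ℓ) := mul_pos hC10 (Real.rpow_pos_of_pos ht0 _)
    rw [hBinf, ENNReal.ofReal_rpow_of_pos hbinf_pos,
      ← ENNReal.ofReal_mul (Real.rpow_nonneg hbinf_pos.le _),
      ENNReal.ofReal_rpow_of_pos (mul_pos (Real.rpow_pos_of_pos hbinf_pos _) hb1_pos)]
    apply ENNReal.ofReal_le_ofReal
    -- real computation
    have hθ0 : (0:ℝ) ≤ (r - 1) * (1 / r) := mul_nonneg (by linarith) (div_nonneg zero_le_one hr0.le)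
    have h1r0 : (0:ℝ) ≤ 1 / r := div_nonneg zero_le_one hr0.le
    rw [Real.mul_rpow (Real.rpow_nonneg hbinf_pos.le _) hb1_pos.le,
      ← Real.rpow_mul hbinf_pos.le,
      Real.mul_rpow hCinf0.le (Real.rpow_nonneg ht0.le _),
      Real.mul_rpow hC10.le (Real.rpow_nonneg ht0.le _),
      ← Real.rpow_mul ht0.le, ← Real.rpow_mul ht0.le]
    have hrearr : Cinf ^ ((r - 1) * (1 / r)) * t ^ (α * ((r - 1) * (1 / r)))
        * (C1 ^ (1 / r) * t ^ (a / ℓ * (1 / r)))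
        = (Cinf ^ ((r - 1) * (1 / r)) * C1 ^ (1 / r))
          * (t ^ (α * ((r - 1) * (1 / r))) * t ^ (a / ℓ * (1 / r))) := by ring
    rw [hrearr, ← Real.rpow_add ht0]
    have hEeq : α * ((r - 1) * (1 / r)) + a / ℓ * (1 / r)
        = -(∑ j, s j) / ℓ * (1 - (p⁻¹).toReal) + a / ℓ := by
      rw [ENNReal.toReal_inv, ← hr, hα]
      field_simp
      ring
    rw [hEeq]
    refine mul_le_mul_of_nonneg_right ?_ (Real.rpow_nonneg ht0.le _)
    calc Cinf ^ ((r - 1) * (1 / r)) * C1 ^ (1 / r)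
        ≤ C ^ ((r - 1) * (1 / r)) * C ^ (1 / r) :=
          mul_le_mul (Real.rpow_le_rpow hCinf0.le (le_max_left _ _) hθ0)
            (Real.rpow_le_rpow hC10.le (le_max_right _ _) h1r0)
            (Real.rpow_nonneg hC10.le _) (Real.rpow_nonneg (le_of_lt hC0) _)
      _ = C ^ ((r - 1) * (1 / r) + 1 / r) := (Real.rpow_add hC0 _ _).symm
      _ = C ^ (1:ℝ) := by
          congr 1
          field_simp; ring
      _ = C := Real.rpow_one C
end

section
/- (Stability of degeneracy lines under ε-perturbation.) For each tree μ write r_{ε,∞}(μ) = n_μ(r_0 − ε) + m_μ β_0 + Σ_j l_μ^j s_j with n_μ ≥ 1, and set p_ε(μ) = |s|/(−r_{ε,∞}(μ)) whenever r_{ε,∞}(μ) < 0. If two trees μ, ν satisfy p_0(μ) = p_0(ν) and r_0 ∉ ℚ[β_0, s], then n_μ = n_ν and consequently p_ε(μ) = p_ε(ν) for every ε ≥ 0 for which both are defined. Conversely, if p_0(μ) < p_0(ν), then p_ε(μ) < p_ε(ν) for all sufficiently small ε ≥ 0. -/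
/-- Stability of degeneracy lines under `ε`-perturbation.  With
`r_ε(μ) = n_μ(r₀-ε) + m_μ β₀ + Σ_j l_μ^j s_j` and `p_ε(μ) = |s|/(-r_ε(μ))`:
if `p₀(μ) = p₀(ν)` and `r₀ ∉ ℚ[β₀,s]` then `n_μ = n_ν` and `p_ε(μ) = p_ε(ν)` for
all `ε ≥ 0`; and if `p₀(μ) < p₀(ν)` then `p_ε(μ) < p_ε(ν)` for all small `ε ≥ 0`. -/
theorem degeneracy_line_stability
    (d : ℕ) (hd : 0 < d) (s : Fin d → ℝ) (hs : ∀ j, 1 ≤ s j)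
    (r0 β0 : ℝ) (hβ0 : 0 < β0)
    (hirr : ¬ ∃ (q : ℚ) (qs : Fin d → ℚ), r0 = (q : ℝ) * β0 + ∑ j, (qs j : ℝ) * s j)
    (nμ nν : ℕ) (hnμ : 1 ≤ nμ) (hnν : 1 ≤ nν)
    (mμ mν : ℤ) (lμ lν : Fin d → ℤ) :
    let rE : ℕ → ℤ → (Fin d → ℤ) → ℝ → ℝ :=
      fun n m l ε => (n : ℝ) * (r0 - ε) + (m : ℝ) * β0 + ∑ j, (l j : ℝ) * s j
    let pE : ℕ → ℤ → (Fin d → ℤ) → ℝ → ℝ :=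
      fun n m l ε => (∑ j, s j) / (-(rE n m l ε))
    rE nμ mμ lμ 0 < 0 → rE nν mν lν 0 < 0 →
    ((pE nμ mμ lμ 0 = pE nν mν lν 0 →
        nμ = nν ∧ ∀ ε : ℝ, 0 ≤ ε → pE nμ mμ lμ ε = pE nν mν lν ε) ∧
     (pE nμ mμ lμ 0 < pE nν mν lν 0 →
        ∃ ε0 : ℝ, 0 < ε0 ∧ ∀ ε : ℝ, 0 ≤ ε → ε < ε0 →
          pE nμ mμ lμ ε < pE nν mν lν ε)) := by
  intro rE pE hμ hν
  have hS : 0 < ∑ j, s j := by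
    apply Finset.sum_pos (fun j _ => lt_of_lt_of_le one_pos (hs j))
    simpa [Finset.univ_nonempty_iff] using Fin.pos_iff_nonempty.mp hd
  constructor
  · intro hp
    -- equality of r at 0
    have hμ' : 0 < -(rE nμ mμ lμ 0) := by linarith
    have hν' : 0 < -(rE nν mν lν 0) := by linarith
    have h1 : rE nμ mμ lμ 0 = rE nν mν lν 0 := by
      have h2 : -(rE nμ mμ lμ 0) = -(rE nν mν lν 0) := by
        have h := hp
        simp only [pE] at h
        rw [div_eq_div_iff hμ'.ne' hν'.ne'] at h
        exact (mul_left_cancel₀ (ne_of_gt hS) h).symm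
      linarith
    have h1' : (nμ : ℝ) * r0 + (mμ : ℝ) * β0 + ∑ j, (lμ j : ℝ) * s j
        = (nν : ℝ) * r0 + (mν : ℝ) * β0 + ∑ j, (lν j : ℝ) * s j := by
      simpa [rE] using h1
    have hn : nμ = nν := by
      by_contra hne
      have hk : ((nμ : ℝ) - (nν : ℝ)) ≠ 0 := by
        intro h
        exact hne (Nat.cast_injective (by linarith : (nμ : ℝ) = nν))
      set k : ℚ := (nμ : ℚ) - (nν : ℚ) with hkdef
      have hkQ : (k : ℝ) = (nμ : ℝ) - (nν : ℝ) := by rw [hkdef]; push_cast; ring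
      have hkne : (k : ℝ) ≠ 0 := by rw [hkQ]; exact hk
      apply hirr
      refine ⟨((mν : ℚ) - (mμ : ℚ)) / k, fun j => ((lν j : ℚ) - (lμ j : ℚ)) / k, ?_⟩
      have hterm : ∀ j ∈ Finset.univ,
          (((((lν j : ℚ) - (lμ j : ℚ)) / k : ℚ)) : ℝ) * s j
            = (((lν j : ℝ) - (lμ j : ℝ)) * s j) / (k : ℝ) := by
        intro j _
        push_cast
        ring
      rw [Finset.sum_congr rfl hterm, ← Finset.sum_div]
      have hb : ((((mν : ℚ) - (mμ : ℚ)) / k : ℚ) : ℝ)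
          = ((mν : ℝ) - (mμ : ℝ)) / (k : ℝ) := by push_cast; ring
      rw [hb, div_mul_eq_mul_div, ← add_div, eq_div_iff hkne, hkQ]
      have hsplit : ∑ i, ((lν i : ℝ) - (lμ i : ℝ)) * s i
          = (∑ i, (lν i : ℝ) * s i) - ∑ i, (lμ i : ℝ) * s i := by
        rw [← Finset.sum_sub_distrib]
        exact Finset.sum_congr rfl fun i _ => by ring
      rw [hsplit]
      linear_combination h1'
    refine ⟨hn, fun ε _ => ?_⟩
    subst hn
    have : (mμ : ℝ) * β0 + ∑ j, (lμ j : ℝ) * s j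
        = (mν : ℝ) * β0 + ∑ j, (lν j : ℝ) * s j := by linarith
    simp only [pE, rE]
    rw [show ((nμ : ℝ) * (r0 - ε) + (mμ : ℝ) * β0 + ∑ j, (lμ j : ℝ) * s j)
        = ((nμ : ℝ) * (r0 - ε) + (mν : ℝ) * β0 + ∑ j, (lν j : ℝ) * s j) by linarith]
  · intro hp
    have hμ' : 0 < -(rE nμ mμ lμ 0) := by linarith
    have hν' : 0 < -(rE nν mν lν 0) := by linarith
    have hlt : -(rE nν mν lν 0) < -(rE nμ mμ lμ 0) := by
      by_contra h
      push_neg at h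
      have : pE nν mν lν 0 ≤ pE nμ mμ lμ 0 :=
        div_le_div_of_nonneg_left (le_of_lt hS) hμ' h
      linarith
    set δ : ℝ := rE nν mν lν 0 - rE nμ mμ lμ 0 with hδ
    have hδpos : 0 < δ := by simp only [hδ]; linarith
    refine ⟨δ / ((nμ : ℝ) + (nν : ℝ) + 1), by positivity, fun ε hε hεlt => ?_⟩
    have hεμ : rE nμ mμ lμ ε = rE nμ mμ lμ 0 - (nμ : ℝ) * ε := by
      simp only [rE]; ring
    have hεν : rE nν mν lν ε = rE nν mν lν 0 - (nν : ℝ) * ε := by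
      simp only [rE]; ring
    have hnνpos : (0:ℝ) < (nμ : ℝ) + (nν : ℝ) + 1 := by positivity
    have hgap : rE nμ mμ lμ ε < rE nν mν lν ε := by
      rw [hεμ, hεν]
      have h1 : ((nν : ℝ) - (nμ : ℝ)) * ε < δ := by
        have hεδ : ε * ((nμ : ℝ) + (nν : ℝ) + 1) < δ := (lt_div_iff₀ hnνpos).mp hεlt
        nlinarith [mul_nonneg (Nat.cast_nonneg nμ : (0:ℝ) ≤ nμ) hε,
          mul_nonneg (Nat.cast_nonneg nν : (0:ℝ) ≤ nν) hε]
      simp only [hδ] at h1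
      linarith
    have hμε : rE nμ mμ lμ ε < 0 := by
      rw [hεμ]
      nlinarith [mul_nonneg (Nat.cast_nonneg nμ : (0:ℝ) ≤ nμ) hε]
    have hνε : rE nν mν lν ε < 0 := by
      rw [hεν]
      nlinarith [mul_nonneg (Nat.cast_nonneg nν : (0:ℝ) ≤ nν) hε]
    simp only [pE]
    exact div_lt_div_of_pos_left hS (by linarith) (by linarith)
end
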